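/- Let r : ℝ → ℝ be twice continuously differentiable with 0 < r(t) < 1 for all t ∈ ℝ, let F(s,t) = (√(1 − r(t)²) cos s, √(1 − r(t)²) sin s, r(t) cos t, r(t) sin t) ∈ ℝ⁴, and let ν(s,t) = [ r(t)²√(1 − r(t)²)·(cos s, sin s, 0, 0) − r(t)(1 − r(t)²)·(0, 0, cos t, sin t) − r'(t)·(0, 0, sin t, −cos t) ] / √(r'(t)² + r(t)²(1 − r(t)²)). Then for all (s,t) ∈ ℝ²: ‖ν(s,t)‖ = 1, ⟨ν(s,t), F(s,t)⟩ = 0, ⟨ν(s,t), ∂F/∂s⟩ = 0, and ⟨ν(s,t), ∂F/∂t⟩ = 0, where ∂F/∂s and ∂F/∂t denote the derivatives of the maps s ↦ F(s,t) and t ↦ F(s,t) respectively. -/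

import Mathlib

open scoped RealInnerProductSpace

lemma euclid_inner4 (v w : Fin 4 → ℝ) :
    ⟪(WithLp.equiv 2 (Fin 4 → ℝ)).symm v, (WithLp.equiv 2 (Fin 4 → ℝ)).symm w⟫
      = v 0 * w 0 + v 1 * w 1 + v 2 * w 2 + v 3 * w 3 := by
  simp [PiLp.inner_apply, Fin.sum_univ_four, RCLike.inner_apply]
  ring

lemma euclid_hasDerivAt4 (f : ℝ → Fin 4 → ℝ) (f' : Fin 4 → ℝ) (x : ℝ)
    (h : ∀ i, HasDerivAt (fun x => f x i) (f' i) x) :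
    HasDerivAt (fun x => (WithLp.equiv 2 (Fin 4 → ℝ)).symm (f x))
      ((WithLp.equiv 2 (Fin 4 → ℝ)).symm f') x := by
  have h1 : HasDerivAt f f' x := hasDerivAt_pi.mpr h
  exact ((EuclideanSpace.equiv (Fin 4) ℝ).symm.hasFDerivAt.comp_hasDerivAt x h1)

/-- The vector field `ν` is a unit normal along the rotationally symmetric immersion
`F(s,t) = (√(1−r²) cos s, √(1−r²) sin s, r cos t, r sin t)` into `S³ ⊂ ℝ⁴`. -/
theorem unit_normal_of_rotational_immersion
    (r : ℝ → ℝ) (hr : ContDiff ℝ 2 r) (hr01 : ∀ t : ℝ, 0 < r t ∧ r t < 1)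
    (F ν : ℝ → ℝ → EuclideanSpace ℝ (Fin 4))
    (hF : ∀ s t : ℝ, F s t = (WithLp.equiv 2 (Fin 4 → ℝ)).symm
      ![Real.sqrt (1 - r t ^ 2) * Real.cos s,
        Real.sqrt (1 - r t ^ 2) * Real.sin s,
        r t * Real.cos t,
        r t * Real.sin t])
    (hν : ∀ s t : ℝ, ν s t =
      (Real.sqrt ((deriv r t) ^ 2 + r t ^ 2 * (1 - r t ^ 2)))⁻¹ •
        ((r t ^ 2 * Real.sqrt (1 - r t ^ 2)) •
            (WithLp.equiv 2 (Fin 4 → ℝ)).symm ![Real.cos s, Real.sin s, 0, 0]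
          - (r t * (1 - r t ^ 2)) •
            (WithLp.equiv 2 (Fin 4 → ℝ)).symm ![0, 0, Real.cos t, Real.sin t]
          - deriv r t •
            (WithLp.equiv 2 (Fin 4 → ℝ)).symm ![0, 0, Real.sin t, -Real.cos t])) :
    ∀ s t : ℝ,
      ‖ν s t‖ = 1 ∧
      ⟪ν s t, F s t⟫ = 0 ∧
      ⟪ν s t, deriv (fun s' => F s' t) s⟫ = 0 ∧
      ⟪ν s t, deriv (fun t' => F s t') t⟫ = 0 := by
  intro s t
  have hrd : HasDerivAt r (deriv r t) t := ((hr.differentiable two_ne_zero) t).hasDerivAt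
  obtain ⟨hρ0, hρ1⟩ := hr01 t
  set ρ := r t with hρdef
  set b := deriv r t with hbdef
  have hpos : (0:ℝ) < 1 - ρ ^ 2 := by nlinarith
  set a := Real.sqrt (1 - ρ ^ 2) with hadef
  set Q := Real.sqrt (b ^ 2 + ρ ^ 2 * (1 - ρ ^ 2)) with hQdef
  have ha2 : a ^ 2 = 1 - ρ ^ 2 := Real.sq_sqrt hpos.le
  have hapos : 0 < a := Real.sqrt_pos.mpr hpos
  have hQ2 : Q ^ 2 = b ^ 2 + ρ ^ 2 * (1 - ρ ^ 2) := Real.sq_sqrt (by positivity)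
  have hQpos : 0 < Q := Real.sqrt_pos.mpr (by positivity)
  have hs2 := Real.sin_sq_add_cos_sq s
  have ht2 := Real.sin_sq_add_cos_sq t
  -- explicit form of ν
  have hν' : ν s t = Q⁻¹ • (WithLp.equiv 2 (Fin 4 → ℝ)).symm
      ![ρ ^ 2 * a * Real.cos s, ρ ^ 2 * a * Real.sin s,
        -(ρ * (1 - ρ ^ 2)) * Real.cos t - b * Real.sin t,
        -(ρ * (1 - ρ ^ 2)) * Real.sin t + b * Real.cos t] := by
    rw [hν]
    congr 1
    ext i
    fin_cases i <;>
      simp [hρdef, hbdef, hadef]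
  -- derivative in s
  have hFs : deriv (fun s' => F s' t) s = (WithLp.equiv 2 (Fin 4 → ℝ)).symm
      ![a * -Real.sin s, a * Real.cos s, 0, 0] := by
    have : (fun s' => F s' t) = fun s' => (WithLp.equiv 2 (Fin 4 → ℝ)).symm
        ![a * Real.cos s', a * Real.sin s', ρ * Real.cos t, ρ * Real.sin t] := by
      funext s'; rw [hF]
    rw [this]
    apply HasDerivAt.deriv
    apply euclid_hasDerivAt4
    intro i
    fin_cases i <;> simp only [Matrix.cons_val_zero, Matrix.cons_val_one, Matrix.head_cons,
      Matrix.cons_val_two, Matrix.tail_cons, Matrix.cons_val_three]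
    · exact (Real.hasDerivAt_cos s).const_mul a
    · exact (Real.hasDerivAt_sin s).const_mul a
    · exact hasDerivAt_const _ _
    · exact hasDerivAt_const _ _
  -- derivative in t
  have h1 : HasDerivAt (fun t' => 1 - r t' ^ 2) (-(2 * ρ ^ 1 * b)) t := by
    simpa using ((hrd.pow 2).const_sub 1)
  have hsne : a ≠ 0 := ne_of_gt hapos
  have h2 : HasDerivAt (fun t' => Real.sqrt (1 - r t' ^ 2))
      (1 / (2 * a) * -(2 * ρ ^ 1 * b)) t :=
    (Real.hasDerivAt_sqrt (ne_of_gt hpos)).comp t h1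
  have h2' : HasDerivAt (fun t' => Real.sqrt (1 - r t' ^ 2)) (-(ρ * b) / a) t := by
    convert h2 using 1
    field_simp
  have hFt : deriv (fun t' => F s t') t = (WithLp.equiv 2 (Fin 4 → ℝ)).symm
      ![-(ρ * b) / a * Real.cos s, -(ρ * b) / a * Real.sin s,
        b * Real.cos t - ρ * Real.sin t, b * Real.sin t + ρ * Real.cos t] := by
    have heq : (fun t' => F s t') = fun t' => (WithLp.equiv 2 (Fin 4 → ℝ)).symm
        ![Real.sqrt (1 - r t' ^ 2) * Real.cos s, Real.sqrt (1 - r t' ^ 2) * Real.sin s,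
          r t' * Real.cos t', r t' * Real.sin t'] := by
      funext t'; rw [hF]
    rw [heq]
    apply HasDerivAt.deriv
    apply euclid_hasDerivAt4
    intro i
    fin_cases i <;> simp only [Matrix.cons_val_zero, Matrix.cons_val_one, Matrix.head_cons,
      Matrix.cons_val_two, Matrix.tail_cons, Matrix.cons_val_three]
    · exact h2'.mul_const _
    · exact h2'.mul_const _
    · simpa [hρdef, sub_eq_add_neg, Pi.mul_def] using hrd.mul (Real.hasDerivAt_cos t)
    · simpa [hρdef, sub_eq_add_neg, Pi.mul_def] using hrd.mul (Real.hasDerivAt_sin t)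
  refine ⟨?_, ?_, ?_, ?_⟩
  · have key : ⟪ν s t, ν s t⟫ = 1 := by
      rw [hν', real_inner_smul_left, real_inner_smul_right, euclid_inner4]
      simp only [Matrix.cons_val_zero, Matrix.cons_val_one, Matrix.head_cons,
        Matrix.cons_val_two, Matrix.tail_cons, Matrix.cons_val_three]
      have hQne : Q ≠ 0 := ne_of_gt hQpos
      field_simp
      linear_combination (ρ^4*(1-ρ^2))*hs2 + ((ρ*(1-ρ^2))^2 + b^2)*ht2
        + (ρ^4*(Real.cos s^2 + Real.sin s^2))*ha2 - hQ2
    have hn := real_inner_self_eq_norm_sq (ν s t)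
    nlinarith [norm_nonneg (ν s t), key, hn]
  · rw [hν', hF, real_inner_smul_left, euclid_inner4]
    simp only [Matrix.cons_val_zero, Matrix.cons_val_one, Matrix.head_cons,
      Matrix.cons_val_two, Matrix.tail_cons, Matrix.cons_val_three]
    have : ρ ^ 2 * a * Real.cos s * (a * Real.cos s) + ρ ^ 2 * a * Real.sin s * (a * Real.sin s)
        + (-(ρ * (1 - ρ ^ 2)) * Real.cos t - b * Real.sin t) * (ρ * Real.cos t)
        + (-(ρ * (1 - ρ ^ 2)) * Real.sin t + b * Real.cos t) * (ρ * Real.sin t) = 0 := by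
      linear_combination (ρ^2*(1-ρ^2))*hs2 - (ρ^2*(1-ρ^2))*ht2
        + (ρ^2*(Real.cos s^2 + Real.sin s^2))*ha2
    rw [this, mul_zero]
  · rw [hν', hFs, real_inner_smul_left, euclid_inner4]
    simp only [Matrix.cons_val_zero, Matrix.cons_val_one, Matrix.head_cons,
      Matrix.cons_val_two, Matrix.tail_cons, Matrix.cons_val_three]
    ring
  · rw [hν', hFt, real_inner_smul_left, euclid_inner4]
    simp only [Matrix.cons_val_zero, Matrix.cons_val_one, Matrix.head_cons,
      Matrix.cons_val_two, Matrix.tail_cons, Matrix.cons_val_three]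
    have : ρ ^ 2 * a * Real.cos s * (-(ρ * b) / a * Real.cos s)
        + ρ ^ 2 * a * Real.sin s * (-(ρ * b) / a * Real.sin s)
        + (-(ρ * (1 - ρ ^ 2)) * Real.cos t - b * Real.sin t) * (b * Real.cos t - ρ * Real.sin t)
        + (-(ρ * (1 - ρ ^ 2)) * Real.sin t + b * Real.cos t) * (b * Real.sin t + ρ * Real.cos t)
        = 0 := by
      have hX : a * (-(ρ * b) / a) = -(ρ * b) := by field_simp
      linear_combination (ρ^2*Real.cos s^2 + ρ^2*Real.sin s^2)*hX - (ρ^3*b)*hs2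
        + (ρ^3*b)*ht2
    rw [this, mul_zero]
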